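/- For indeterminates x_1,…,x_n, y_1,…,y_n, t, one has det[ (1−t) / ((1−x_i y_j)(1−t x_i y_j)) ]_{1≤i,j≤n} = Σ_{S ⊆ {1,…,n}} (−t)^{|S|} det[ 1/(1 − x_i^S y_j) ]_{1≤i,j≤n}, where x_i^S = t x_i if i ∈ S and x_i^S = x_i if i ∉ S, as an identity of rational functions. -/

import Mathlib

noncomputable section

open scoped BigOperators

/-- Expansion of the Izergin–Korepin-type determinant as a sum over subsets `S ⊆ {1,…,n}`:
`det[(1-t)/((1-xᵢyⱼ)(1-t xᵢyⱼ))] = Σ_S (-t)^{|S|} det[1/(1 - xᵢ^S yⱼ)]`,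
where `xᵢ^S = t xᵢ` if `i ∈ S` and `xᵢ^S = xᵢ` otherwise. -/
theorem det_subset_expansion {K : Type*} [Field K] (n : ℕ) (x y : Fin n → K) (t : K)
    (h1 : ∀ i j, x i * y j ≠ 1) (h2 : ∀ i j, t * (x i * y j) ≠ 1) :
    (Matrix.of fun i j : Fin n =>
        (1 - t) / ((1 - x i * y j) * (1 - t * (x i * y j)))).det =
      ∑ S : Finset (Fin n),
        (-t) ^ S.card *
          (Matrix.of fun i j : Fin n =>
            1 / (1 - (if i ∈ S then t * x i else x i) * y j)).det := by
  classical
  set a : Fin n → Fin n → K := fun i j => 1 / (1 - x i * y j) with ha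
  set g : Fin n → Fin n → K := fun i j => 1 / (1 - t * (x i * y j)) with hg
  have hd1 : ∀ i j, (1 : K) - x i * y j ≠ 0 := fun i j =>
    sub_ne_zero.mpr (Ne.symm (h1 i j))
  have hd2 : ∀ i j, (1 : K) - t * (x i * y j) ≠ 0 := fun i j =>
    sub_ne_zero.mpr (Ne.symm (h2 i j))
  have hM : (Matrix.of fun i j : Fin n =>
      (1 - t) / ((1 - x i * y j) * (1 - t * (x i * y j)))) =
      Matrix.of ((-t) • g + a) := by
    ext i j
    simp only [Matrix.of_apply, Pi.add_apply, Pi.smul_apply, smul_eq_mul, ha, hg]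
    rw [mul_one_div, div_add_div _ _ (hd2 i j) (hd1 i j),
      div_eq_div_iff (mul_ne_zero (hd1 i j) (hd2 i j))
        (mul_ne_zero (hd2 i j) (hd1 i j))]
    ring
  rw [hM]
  have step1 : (Matrix.of ((-t) • g + a)).det =
      ∑ S : Finset (Fin n), Matrix.detRowAlternating (S.piecewise ((-t) • g) a) :=
    Matrix.detRowAlternating.toMultilinearMap.map_add_univ ((-t) • g) a
  rw [step1]
  refine Finset.sum_congr rfl fun S _ => ?_
  set m : Fin n → Fin n → K := S.piecewise g a with hm
  have hpw : S.piecewise ((-t) • g) a = S.piecewise (fun i => (-t) • m i) m := by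
    funext i
    by_cases hi : i ∈ S <;> simp [Finset.piecewise, hi, hm]
  have step2 : Matrix.detRowAlternating (S.piecewise ((-t) • g) a) =
      (∏ _i ∈ S, (-t)) • Matrix.detRowAlternating m := by
    rw [hpw]
    exact Matrix.detRowAlternating.toMultilinearMap.map_piecewise_smul (fun _ => -t) m S
  have hmm : m = Matrix.of fun i j : Fin n =>
      1 / (1 - (if i ∈ S then t * x i else x i) * y j) := by
    funext i j
    by_cases hi : i ∈ S <;> simp [hm, Finset.piecewise, hi, hg, ha, mul_assoc]
  rw [step2, Finset.prod_const, smul_eq_mul, hmm]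
  rfl
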